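/- Let $F:\mathbb{R}^d\to\mathbb{R}$ be convex with minimizer $x^*$ and $L$-smooth, and suppose the (accelerated) iterates satisfy $F(w_{t+1}) - F^* \le a_t q_t b_t D$ for all $t$, where $a_t = \frac{2}{t+1}$, $q_t = \frac{2}{t}$, $D \ge 0$, and $b_t = \sqrt{b_0^2 + \sum_{i=1}^t \|\nabla F(v_i)\|^2/q_i^2}$ with $\|\nabla F(v_t)\|^2 \le 2\|\nabla F(v_t) - \nabla F(w_{t+1})\|^2 + 2\|\nabla F(w_{t+1})\|^2$, $\|\nabla F(v_t)-\nabla F(w_{t+1})\| \le L\|v_t - w_{t+1}\|$, $v_t - w_{t+1} = a_t(x_t - x_{t+1})$, $\|x_{t+1}-x_t\|^2 = \frac{\eta^2(b_t^2 - b_{t-1}^2)}{b_t^2}$, $a_t \le q_t$, and $\|\nabla F(w_{t+1})\|^2 \le 2L(F(w_{t+1}) - F^*)$. Then $b_t \le b_0 + \frac{4\eta^2 L^2}{b_0} + 4LDt$ for all $t$. -/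

import Mathlib

open RealInnerProductSpace Finset

set_option maxHeartbeats 1000000

lemma step_ineq_aux (p c K M : ℝ) (hp : 0 < p) (hpc : p ≤ c) (hK : 0 ≤ K) (hM : 0 ≤ M)
    (h : c ^ 2 ≤ p ^ 2 + 2 * K * (c ^ 2 - p ^ 2) / c ^ 2 + M * c) :
    c ≤ p + 4 * K * (1 / p - 1 / c) + M := by
  have hc : 0 < c := lt_of_lt_of_le hp hpc
  have hc2 : (0:ℝ) < c ^ 2 := by positivity
  have h' : c ^ 4 ≤ p ^ 2 * c ^ 2 + 2 * K * (c ^ 2 - p ^ 2) + M * c ^ 3 := by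
    have := mul_le_mul_of_nonneg_right h hc2.le
    have hd : 2 * K * (c ^ 2 - p ^ 2) / c ^ 2 * c ^ 2 = 2 * K * (c ^ 2 - p ^ 2) := by
      field_simp
    nlinarith [this, hd]
  have hq0 : (0:ℝ) ≤ 2 * c ^ 2 - p * c - p ^ 2 := by nlinarith
  have hf : 2 * K * p * (c ^ 2 - p ^ 2) ≤ 4 * K * c ^ 2 * (c - p) := by
    nlinarith [mul_nonneg (mul_nonneg hK (sub_nonneg.mpr hpc)) hq0]
  have H : p * c ^ 4 ≤ p ^ 3 * c ^ 2 + 4 * K * c ^ 2 * (c - p) + M * p * c ^ 3 := by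
    nlinarith [mul_le_mul_of_nonneg_left h' hp.le]
  have hsub : c - p - M ≤ 4 * K * (c - p) / (p * c) := by
    rw [le_div_iff₀ (by positivity)]
    nlinarith [H, hc2, mul_nonneg (mul_nonneg (sq_nonneg p) (sq_nonneg c)) (sub_nonneg.mpr hpc)]
  have heq : 4 * K * (1 / p - 1 / c) = 4 * K * (c - p) / (p * c) := by
    field_simp
  rw [heq]
  linarith

theorem stmt_19 {d : ℕ} (F : EuclideanSpace ℝ (Fin d) → ℝ)
    (xstar : EuclideanSpace ℝ (Fin d)) (L η D b₀ : ℝ)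
    (hL : 0 < L) (hη : 0 < η) (hD : 0 ≤ D) (hb₀ : 0 < b₀)
    (hdiff : Differentiable ℝ F)
    (hconv : ConvexOn ℝ Set.univ F)
    (hmin : ∀ y, F xstar ≤ F y)
    (hLip : ∀ u u', ‖gradient F u - gradient F u'‖ ≤ L * ‖u - u'‖)
    (v w x : ℕ → EuclideanSpace ℝ (Fin d)) (a q b : ℕ → ℝ)
    (ha : ∀ t, a t = 2 / ((t : ℝ) + 1))
    (hq : ∀ t, 1 ≤ t → q t = 2 / (t : ℝ))
    (hb : ∀ t, b t = Real.sqrt (b₀ ^ 2 +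
      ∑ i ∈ Finset.Icc 1 t, ‖gradient F (v i)‖ ^ 2 / (q i) ^ 2))
    (hrate : ∀ t, 1 ≤ t → F (w (t + 1)) - F xstar ≤ a t * q t * b t * D)
    (hvw : ∀ t, 1 ≤ t → v t - w (t + 1) = a t • (x t - x (t + 1)))
    (hstep : ∀ t, 1 ≤ t →
      ‖x (t + 1) - x t‖ ^ 2 = η ^ 2 * ((b t) ^ 2 - (b (t - 1)) ^ 2) / (b t) ^ 2)
    (hgw : ∀ t, 1 ≤ t →
      ‖gradient F (w (t + 1))‖ ^ 2 ≤ 2 * L * (F (w (t + 1)) - F xstar)) :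
    ∀ t, 1 ≤ t → b t ≤ b₀ + 4 * η ^ 2 * L ^ 2 / b₀ + 4 * L * D * t := by
  have hsum_nonneg : ∀ t, (0:ℝ) ≤ ∑ i ∈ Finset.Icc 1 t,
      ‖gradient F (v i)‖ ^ 2 / (q i) ^ 2 :=
    fun t => Finset.sum_nonneg fun i _ => div_nonneg (sq_nonneg _) (sq_nonneg _)
  have hbsq : ∀ t, (b t) ^ 2 = b₀ ^ 2 +
      ∑ i ∈ Finset.Icc 1 t, ‖gradient F (v i)‖ ^ 2 / (q i) ^ 2 := by
    intro t
    rw [hb t]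
    exact Real.sq_sqrt (by nlinarith [hsum_nonneg t])
  have hb0 : b 0 = b₀ := by
    rw [hb 0]
    simp [Real.sqrt_sq hb₀.le]
  have hbge : ∀ t, b₀ ≤ b t := by
    intro t
    conv_lhs => rw [← Real.sqrt_sq hb₀.le]
    rw [hb t]
    exact Real.sqrt_le_sqrt (le_add_of_nonneg_right (hsum_nonneg t))
  have hbpos : ∀ t, 0 < b t := fun t => lt_of_lt_of_le hb₀ (hbge t)
  have hbmono : ∀ n, b n ≤ b (n + 1) := by
    intro n
    rw [hb n, hb (n + 1)]
    apply Real.sqrt_le_sqrt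
    apply add_le_add (le_refl _)
    apply Finset.sum_le_sum_of_subset_of_nonneg
    · exact Finset.Icc_subset_Icc_right (Nat.le_succ n)
    · intro i _ _; exact div_nonneg (sq_nonneg _) (sq_nonneg _)
  have key : ∀ n : ℕ, b n ≤ b₀ + 4 * η ^ 2 * L ^ 2 * (1 / b₀ - 1 / b n) + 4 * L * D * n := by
    intro n
    induction n with
    | zero => rw [hb0]; simp
    | succ n ih =>
      -- notation
      have hApos : 0 < a (n + 1) := by
        rw [ha]; positivity
      have hQval : q (n + 1) = 2 / ((n : ℝ) + 1) := by
        rw [hq (n + 1) (by omega)]; push_cast; ring_nf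
      have hQpos : 0 < q (n + 1) := by
        rw [hQval]; positivity
      have hAQ : a (n + 1) ≤ q (n + 1) := by
        rw [ha, hQval]
        push_cast
        apply div_le_div_of_nonneg_left (by norm_num) (by positivity)
        linarith
      have hrec : (b (n + 1)) ^ 2 = (b n) ^ 2 +
          ‖gradient F (v (n + 1))‖ ^ 2 / (q (n + 1)) ^ 2 := by
        rw [hbsq, hbsq, Finset.sum_Icc_succ_top (by omega : 1 ≤ n + 1)]
        ring
      have hX : ‖x (n + 1 + 1) - x (n + 1)‖ ^ 2 =
          η ^ 2 * ((b (n + 1)) ^ 2 - (b n) ^ 2) / (b (n + 1)) ^ 2 := by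
        have := hstep (n + 1) (by omega)
        simpa using this
      -- gradient bound
      have hgnorm : ‖gradient F (v (n + 1))‖ ^ 2 ≤
          2 * L ^ 2 * ((a (n + 1)) ^ 2 * ‖x (n + 1 + 1) - x (n + 1)‖ ^ 2) +
          2 * ‖gradient F (w (n + 1 + 1))‖ ^ 2 := by
        have h1 : ‖gradient F (v (n + 1))‖ ≤
            ‖gradient F (v (n + 1)) - gradient F (w (n + 1 + 1))‖ +
            ‖gradient F (w (n + 1 + 1))‖ := by
          calc ‖gradient F (v (n + 1))‖
              = ‖(gradient F (v (n + 1)) - gradient F (w (n + 1 + 1))) +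
                  gradient F (w (n + 1 + 1))‖ := by rw [sub_add_cancel]
            _ ≤ _ := norm_add_le _ _
        have h2 := hLip (v (n + 1)) (w (n + 1 + 1))
        have h3 : ‖v (n + 1) - w (n + 1 + 1)‖ =
            a (n + 1) * ‖x (n + 1 + 1) - x (n + 1)‖ := by
          rw [hvw (n + 1) (by omega), norm_smul, Real.norm_eq_abs,
            abs_of_pos hApos, norm_sub_rev]
        rw [h3] at h2
        nlinarith [sq_nonneg (‖gradient F (v (n + 1)) - gradient F (w (n + 1 + 1))‖ -
            ‖gradient F (w (n + 1 + 1))‖),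
          norm_nonneg (gradient F (v (n + 1)) - gradient F (w (n + 1 + 1))),
          norm_nonneg (gradient F (v (n + 1))),
          norm_nonneg (gradient F (w (n + 1 + 1))),
          mul_nonneg hL.le (mul_nonneg hApos.le (norm_nonneg (x (n + 1 + 1) - x (n + 1))))]
      have hgw2 : ‖gradient F (w (n + 1 + 1))‖ ^ 2 ≤
          2 * L * (a (n + 1) * q (n + 1) * b (n + 1) * D) := by
        refine (hgw (n + 1) (by omega)).trans ?_
        have := hrate (n + 1) (by omega)
        nlinarith [hL.le]
      -- main per-step inequality
      have hBpos := hbpos (n + 1)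
      have hPpos := hbpos n
      have hBP := hbmono n
      have hdiffnn : (0:ℝ) ≤ (b (n + 1)) ^ 2 - (b n) ^ 2 := by nlinarith
      have hAQ1 : (a (n + 1)) ^ 2 / (q (n + 1)) ^ 2 ≤ 1 := by
        rw [div_le_one (by positivity)]
        nlinarith
      have hAQ2 : a (n + 1) / q (n + 1) ≤ 1 := by
        rw [div_le_one hQpos]; exact hAQ
      have hmain : (b (n + 1)) ^ 2 ≤ (b n) ^ 2 +
          2 * (L ^ 2 * η ^ 2) * ((b (n + 1)) ^ 2 - (b n) ^ 2) / (b (n + 1)) ^ 2 +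
          4 * L * D * b (n + 1) := by
        have hG : ‖gradient F (v (n + 1))‖ ^ 2 / (q (n + 1)) ^ 2 ≤
            2 * (L ^ 2 * η ^ 2) * ((b (n + 1)) ^ 2 - (b n) ^ 2) / (b (n + 1)) ^ 2 +
            4 * L * D * b (n + 1) := by
          have hQ2 : (0:ℝ) < (q (n + 1)) ^ 2 := by positivity
          calc ‖gradient F (v (n + 1))‖ ^ 2 / (q (n + 1)) ^ 2
              ≤ (2 * L ^ 2 * ((a (n + 1)) ^ 2 * ‖x (n + 1 + 1) - x (n + 1)‖ ^ 2) +
                  2 * ‖gradient F (w (n + 1 + 1))‖ ^ 2) / (q (n + 1)) ^ 2 := by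
                gcongr
            _ = 2 * L ^ 2 * ((a (n + 1)) ^ 2 / (q (n + 1)) ^ 2) *
                  ‖x (n + 1 + 1) - x (n + 1)‖ ^ 2 +
                  2 * (‖gradient F (w (n + 1 + 1))‖ ^ 2 / (q (n + 1)) ^ 2) := by ring
            _ ≤ 2 * L ^ 2 * 1 * ‖x (n + 1 + 1) - x (n + 1)‖ ^ 2 +
                  2 * ((2 * L * (a (n + 1) * q (n + 1) * b (n + 1) * D)) / (q (n + 1)) ^ 2) := by
                gcongr
            _ = 2 * L ^ 2 * ‖x (n + 1 + 1) - x (n + 1)‖ ^ 2 +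
                  4 * L * D * b (n + 1) * (a (n + 1) / q (n + 1)) := by
                field_simp
                ring
            _ ≤ 2 * L ^ 2 * (η ^ 2 * ((b (n + 1)) ^ 2 - (b n) ^ 2) / (b (n + 1)) ^ 2) +
                  4 * L * D * b (n + 1) * 1 := by
                rw [hX]
                gcongr
            _ = 2 * (L ^ 2 * η ^ 2) * ((b (n + 1)) ^ 2 - (b n) ^ 2) / (b (n + 1)) ^ 2 +
                  4 * L * D * b (n + 1) := by ring
        linarith [hrec, hG]
      have hstep' := step_ineq_aux (b n) (b (n + 1)) (L ^ 2 * η ^ 2) (4 * L * D)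
        hPpos hBP (by positivity) (mul_nonneg (by linarith) hD) hmain
      have hstep2 : b (n + 1) ≤ b n +
          4 * η ^ 2 * L ^ 2 * (1 / b n - 1 / b (n + 1)) + 4 * L * D := by
        have h := hstep'
        ring_nf at h ⊢
        linarith
      have hfinal : b (n + 1) ≤ b₀ +
          4 * η ^ 2 * L ^ 2 * (1 / b₀ - 1 / b (n + 1)) + 4 * L * D * (n + 1 : ℕ) := by
        push_cast
        have h2 : 4 * η ^ 2 * L ^ 2 * (1 / b n - 1 / b (n + 1)) +
            4 * η ^ 2 * L ^ 2 * (1 / b₀ - 1 / b n) =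
            4 * η ^ 2 * L ^ 2 * (1 / b₀ - 1 / b (n + 1)) := by ring
        linarith [hstep2, ih, h2]
      exact hfinal
  intro t ht
  have h1 := key t
  have h2 : 0 < 1 / b t := one_div_pos.mpr (hbpos t)
  have h3 : 4 * η ^ 2 * L ^ 2 * (1 / b₀ - 1 / b t) ≤ 4 * η ^ 2 * L ^ 2 / b₀ := by
    rw [div_eq_mul_one_div (4 * η ^ 2 * L ^ 2) b₀]
    apply mul_le_mul_of_nonneg_left _ (by positivity)
    linarith
  linarith
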